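/- arXiv:1312.6716 — 3 statements merged into one kernel-verified Lean document; each statement's English description precedes it below -/
import Mathlib

section
/- For every b > 0, the set E_b = ∪_{n=1}^∞ E_{b,n} is of first Baire category (meagre) in the metric space (F, d). -/
noncomputable section

abbrev Vc : Type := EuclideanSpace ℂ (Fin 2)

/-- Euclidean norm of a lattice point `k ∈ ℤ²`. -/
def knorm (k : ℤ × ℤ) : ℝ := Real.sqrt ((k.1 : ℝ) ^ 2 + (k.2 : ℝ) ^ 2)

/-- The reality condition `û(-k) = conj (û(k))`. -/
def IsRealCond (u : ℤ × ℤ → Vc) : Prop :=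
  ∀ k : ℤ × ℤ, ∀ i : Fin 2, u (-k) i = starRingEnd ℂ (u k i)

/-- Divergence-free condition `k ⬝ û(k) = 0`. -/
def DivFree (u : ℤ × ℤ → Vc) : Prop :=
  ∀ k : ℤ × ℤ, (k.1 : ℂ) * u k 0 + (k.2 : ℂ) * u k 1 = 0

/-- Membership in the Fourier model of the phase space `H`. -/
def InH (u : ℤ × ℤ → Vc) : Prop := u 0 = 0 ∧ IsRealCond u ∧ DivFree u

/-- `|A^{α/2} u|²  =  L² Σ_{k≠0} (κ₀|k|)^{2α} |û(k)|²` for natural `α`. -/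
def sqA (L κ₀ : ℝ) (u : ℤ × ℤ → Vc) (α : ℕ) : ℝ :=
  L ^ 2 * ∑' k : ℤ × ℤ, (κ₀ * knorm k) ^ (2 * α) * ‖u k‖ ^ 2

/-- Finiteness of `|A^{α/2}u|` for natural `α`. -/
def SummableA (κ₀ : ℝ) (u : ℤ × ℤ → Vc) (α : ℕ) : Prop :=
  Summable fun k : ℤ × ℤ => (κ₀ * knorm k) ^ (2 * α) * ‖u k‖ ^ 2

/-- The class `C(σ)`. -/
def InC (L κ₀ ν σ : ℝ) (u : ℤ × ℤ → Vc) : Prop :=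
  (∀ α : ℕ, SummableA κ₀ u α) ∧
  ∃ c₀ : ℝ, ∀ α : ℕ,
    sqA L κ₀ u α ≤ c₀ * Real.exp (σ * (α : ℝ) ^ 2) * ν ^ 2 * κ₀ ^ (2 * α)

/-- The summand of `|u|_b²`. -/
def ebTerm (b : ℝ) (u : ℤ × ℤ → Vc) (k : ℤ × ℤ) : ℝ :=
  Real.exp (2 * b * (Real.log (knorm k + Real.exp 1)) ^ 2) * ‖u k‖ ^ 2

/-- `|u|_b² = L² Σ_{k≠0} e^{2b(ln(|k|+e))²} |û(k)|²`. -/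
def ebSq (L b : ℝ) (u : ℤ × ℤ → Vc) : ℝ := L ^ 2 * ∑' k : ℤ × ℤ, ebTerm b u k

/-- The Fourier model of `F = C^∞ ∩ H`: elements of `H` with `|A^{α/2}u| < ∞`
for every `α ∈ ℕ`. -/
def Fs (L κ₀ : ℝ) : Type := {u : ℤ × ℤ → Vc // InH u ∧ ∀ α : ℕ, SummableA κ₀ u α}

/-- `|A^{α/2} w| = (L² Σ_{k≠0} (κ₀|k|)^{2α} |ŵ(k)|²)^{1/2}`. -/
def nA (L κ₀ : ℝ) (w : ℤ × ℤ → Vc) (α : ℕ) : ℝ := Real.sqrt (sqA L κ₀ w α)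

/-- The Fréchet metric
`d(u,v) = Σ_{α=1}^∞ 2^{-α} |A^{α/2}(u-v)| / (1 + |A^{α/2}(u-v)|)`. -/
def dF (L κ₀ : ℝ) (u v : Fs L κ₀) : ℝ :=
  ∑' α : ℕ, (1 / 2 ^ (α + 1)) *
    (nA L κ₀ (fun k => u.1 k - v.1 k) (α + 1) /
      (1 + nA L κ₀ (fun k => u.1 k - v.1 k) (α + 1)))

/-- The topology on `(F, d)` generated by the open balls of the metric `d`. -/
noncomputable instance topF (L κ₀ : ℝ) : TopologicalSpace (Fs L κ₀) :=
  TopologicalSpace.generateFrom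
    {B | ∃ x : Fs L κ₀, ∃ r : ℝ, B = {y : Fs L κ₀ | dF L κ₀ x y < r}}

/-- The set `E_{b,n} = {u ∈ E_b : |u|_b ≤ n}`, viewed as a subset of `F`. -/
def EbnSet (L κ₀ b : ℝ) (n : ℕ) : Set (Fs L κ₀) :=
  {u : Fs L κ₀ | Summable (ebTerm b u.1) ∧
    Real.sqrt (L ^ 2 * ∑' k : ℤ × ℤ, ebTerm b u.1 k) ≤ n}

set_option maxHeartbeats 1000000

-- auxiliary lemmas, to be inserted before the theorem
section Aux

open Real Finset

lemma knorm_nonneg (k : ℤ × ℤ) : 0 ≤ knorm k := Real.sqrt_nonneg _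

lemma knorm_neg (k : ℤ × ℤ) : knorm (-k) = knorm k := by
  unfold knorm
  rw [Prod.fst_neg, Prod.snd_neg]
  push_cast
  ring_nf

lemma knorm_pos {k : ℤ × ℤ} (hk : k ≠ 0) : 0 < knorm k := by
  rw [knorm, Real.sqrt_pos]
  rcases eq_or_ne k.1 0 with h1 | h1
  · have h2 : k.2 ≠ 0 := by
      intro h2
      exact hk (Prod.ext h1 h2)
    have h2' : (k.2 : ℝ) ≠ 0 := Int.cast_ne_zero.2 h2
    positivity
  · have h1' : (k.1 : ℝ) ≠ 0 := Int.cast_ne_zero.2 h1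
    positivity

lemma weight_nonneg (κ₀ : ℝ) (k : ℤ × ℤ) (α : ℕ) : 0 ≤ (κ₀ * knorm k) ^ (2 * α) := by
  rw [pow_mul]
  positivity

lemma sqA_term_nonneg (κ₀ : ℝ) (u : ℤ × ℤ → Vc) (α : ℕ) (k : ℤ × ℤ) :
    0 ≤ (κ₀ * knorm k) ^ (2 * α) * ‖u k‖ ^ 2 :=
  mul_nonneg (weight_nonneg κ₀ k α) (sq_nonneg _)

lemma nA_nonneg (L κ₀ : ℝ) (w : ℤ × ℤ → Vc) (α : ℕ) : 0 ≤ nA L κ₀ w α :=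
  Real.sqrt_nonneg _

/-- ℓ² triangle inequality (Minkowski) for tsums. -/
lemma l2_triangle {I : Type*} (f g : I → ℝ)
    (hf : Summable fun i => f i ^ 2) (hg : Summable fun i => g i ^ 2) :
    Real.sqrt (∑' i, (f i + g i) ^ 2) ≤
      Real.sqrt (∑' i, f i ^ 2) + Real.sqrt (∑' i, g i ^ 2) := by
  have h2 : (0:ℝ) < (2 : ENNReal).toReal := by norm_num
  have hconv : ∀ (h : I → ℝ) (i : I), ‖h i‖ ^ (2 : ENNReal).toReal = h i ^ 2 := by
    intro h i
    rw [show ((2 : ENNReal).toReal) = ((2:ℕ):ℝ) by norm_num, Real.rpow_natCast,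
      Real.norm_eq_abs, sq_abs]
  have hf' : Memℓp f 2 := memℓp_gen (by simpa only [hconv] using hf)
  have hg' : Memℓp g 2 := memℓp_gen (by simpa only [hconv] using hg)
  have hnorm : ∀ H : lp (fun _ : I => ℝ) 2,
      Real.sqrt (∑' i, (H : ∀ _ : I, ℝ) i ^ 2) = ‖H‖ := by
    intro H
    have hh := lp.norm_rpow_eq_tsum h2 H
    simp only [hconv] at hh
    rw [← hh, show ((2 : ENNReal).toReal) = ((2:ℕ):ℝ) by norm_num, Real.rpow_natCast,
      Real.sqrt_sq (norm_nonneg H)]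
  have hFG := norm_add_le (⟨f, hf'⟩ : lp (fun _ : I => ℝ) 2) ⟨g, hg'⟩
  have hcoe : ((⟨f, hf'⟩ + ⟨g, hg'⟩ : lp (fun _ : I => ℝ) 2) : ∀ _ : I, ℝ)
      = fun i => f i + g i := rfl
  have hcoe1 : ((⟨f, hf'⟩ : lp (fun _ : I => ℝ) 2) : ∀ _ : I, ℝ) = f := rfl
  have hcoe2 : ((⟨g, hg'⟩ : lp (fun _ : I => ℝ) 2) : ∀ _ : I, ℝ) = g := rfl
  rw [← hnorm, ← hnorm, ← hnorm, hcoe, hcoe1, hcoe2] at hFG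
  simpa using hFG

lemma SummableA.sub' {κ₀ : ℝ} {u v : ℤ × ℤ → Vc} {α : ℕ}
    (hu : SummableA κ₀ u α) (hv : SummableA κ₀ v α) :
    SummableA κ₀ (fun k => u k - v k) α := by
  have hu' : Summable (fun k => (κ₀ * knorm k) ^ (2*α) * ‖u k‖ ^ 2) := hu
  have hv' : Summable (fun k => (κ₀ * knorm k) ^ (2*α) * ‖v k‖ ^ 2) := hv
  show Summable (fun k => (κ₀ * knorm k) ^ (2*α) * ‖u k - v k‖ ^ 2)
  refine Summable.of_nonneg_of_le
    (fun k => sqA_term_nonneg κ₀ (fun j => u j - v j) α k) (fun k => ?_)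
    ((hu'.mul_left 2).add (hv'.mul_left 2))
  have h1 : ‖u k - v k‖ ≤ ‖u k‖ + ‖v k‖ := norm_sub_le _ _
  have h2 : ‖u k - v k‖ ^ 2 ≤ (‖u k‖ + ‖v k‖) ^ 2 :=
    pow_le_pow_left₀ (norm_nonneg _) h1 2
  have h3 : (‖u k‖ + ‖v k‖) ^ 2 ≤ 2 * ‖u k‖ ^ 2 + 2 * ‖v k‖ ^ 2 := by
    nlinarith [sq_nonneg (‖u k‖ - ‖v k‖)]
  have hw : 0 ≤ (κ₀ * knorm k) ^ (2*α) := weight_nonneg κ₀ k α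
  calc (κ₀ * knorm k) ^ (2*α) * ‖u k - v k‖ ^ 2
      ≤ (κ₀ * knorm k) ^ (2*α) * (2 * ‖u k‖ ^ 2 + 2 * ‖v k‖ ^ 2) := by
        exact mul_le_mul_of_nonneg_left (le_trans h2 h3) hw
    _ = 2 * ((κ₀ * knorm k) ^ (2*α) * ‖u k‖ ^ 2) + 2 * ((κ₀ * knorm k) ^ (2*α) * ‖v k‖ ^ 2) := by
        ring

lemma nA_eq (L κ₀ : ℝ) (hL : 0 ≤ L) (w : ℤ × ℤ → Vc) (α : ℕ) :
    nA L κ₀ w α = L * Real.sqrt (∑' k, (κ₀ * knorm k) ^ (2 * α) * ‖w k‖ ^ 2) := by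
  rw [nA, sqA, Real.sqrt_mul (sq_nonneg L), Real.sqrt_sq hL]

lemma nA_add_le (L κ₀ : ℝ) (hL : 0 ≤ L) (w₁ w₂ : ℤ × ℤ → Vc) (α : ℕ)
    (h1 : SummableA κ₀ w₁ α) (h2 : SummableA κ₀ w₂ α) :
    nA L κ₀ (fun k => w₁ k + w₂ k) α ≤ nA L κ₀ w₁ α + nA L κ₀ w₂ α := by
  have hterm : ∀ (w : (ℤ×ℤ) → Vc) (k : ℤ×ℤ),
      (κ₀ * knorm k) ^ (2*α) * ‖w k‖^2 = (|κ₀ * knorm k| ^ α * ‖w k‖)^2 := by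
    intro w k
    have habs : (|κ₀ * knorm k| ^ α) ^ 2 = (κ₀ * knorm k) ^ (2*α) := by
      rw [← pow_mul, mul_comm α 2, ← abs_pow, abs_of_nonneg (weight_nonneg κ₀ k α)]
    rw [← habs]
    ring
  have hfs : Summable (fun k => (|κ₀ * knorm k| ^ α * ‖w₁ k‖)^2) :=
    h1.congr fun k => hterm w₁ k
  have hgs : Summable (fun k => (|κ₀ * knorm k| ^ α * ‖w₂ k‖)^2) :=
    h2.congr fun k => hterm w₂ k
  have hkey : ∀ k, (κ₀ * knorm k) ^ (2*α) * ‖w₁ k + w₂ k‖^2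
      ≤ (|κ₀ * knorm k| ^ α * ‖w₁ k‖ + |κ₀ * knorm k| ^ α * ‖w₂ k‖)^2 := by
    intro k
    rw [hterm (fun k => w₁ k + w₂ k) k]
    refine pow_le_pow_left₀ (mul_nonneg (pow_nonneg (abs_nonneg _) _) (norm_nonneg _)) ?_ 2
    calc |κ₀ * knorm k| ^ α * ‖w₁ k + w₂ k‖
        ≤ |κ₀ * knorm k| ^ α * (‖w₁ k‖ + ‖w₂ k‖) :=
          mul_le_mul_of_nonneg_left (norm_add_le _ _) (pow_nonneg (abs_nonneg _) _)
      _ = |κ₀ * knorm k| ^ α * ‖w₁ k‖ + |κ₀ * knorm k| ^ α * ‖w₂ k‖ := by ring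
  have hbound : ∀ k, (|κ₀ * knorm k| ^ α * ‖w₁ k‖ + |κ₀ * knorm k| ^ α * ‖w₂ k‖)^2
      ≤ 2 * (|κ₀ * knorm k| ^ α * ‖w₁ k‖)^2 + 2 * (|κ₀ * knorm k| ^ α * ‖w₂ k‖)^2 := by
    intro k
    nlinarith [sq_nonneg (|κ₀ * knorm k| ^ α * ‖w₁ k‖ - |κ₀ * knorm k| ^ α * ‖w₂ k‖)]
  have hsumR : Summable (fun k =>
      (|κ₀ * knorm k| ^ α * ‖w₁ k‖ + |κ₀ * knorm k| ^ α * ‖w₂ k‖)^2) :=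
    Summable.of_nonneg_of_le (fun k => sq_nonneg _) hbound
      ((hfs.mul_left 2).add (hgs.mul_left 2))
  have hsumL : Summable (fun k => (κ₀ * knorm k) ^ (2*α) * ‖w₁ k + w₂ k‖^2) :=
    Summable.of_nonneg_of_le (fun k => sqA_term_nonneg κ₀ (fun j => w₁ j + w₂ j) α k)
      (fun k => le_trans (hkey k) (hbound k)) ((hfs.mul_left 2).add (hgs.mul_left 2))
  rw [nA_eq L κ₀ hL, nA_eq L κ₀ hL, nA_eq L κ₀ hL, ← mul_add]
  refine mul_le_mul_of_nonneg_left ?_ hL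
  calc Real.sqrt (∑' k, (κ₀ * knorm k) ^ (2*α) * ‖w₁ k + w₂ k‖^2)
      ≤ Real.sqrt (∑' k, (|κ₀ * knorm k| ^ α * ‖w₁ k‖ + |κ₀ * knorm k| ^ α * ‖w₂ k‖)^2) :=
        Real.sqrt_le_sqrt (Summable.tsum_le_tsum hkey hsumL hsumR)
    _ ≤ Real.sqrt (∑' k, (|κ₀ * knorm k| ^ α * ‖w₁ k‖)^2)
        + Real.sqrt (∑' k, (|κ₀ * knorm k| ^ α * ‖w₂ k‖)^2) :=
        l2_triangle _ _ hfs hgs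
    _ = Real.sqrt (∑' k, (κ₀ * knorm k) ^ (2*α) * ‖w₁ k‖^2)
        + Real.sqrt (∑' k, (κ₀ * knorm k) ^ (2*α) * ‖w₂ k‖^2) := by
        rw [tsum_congr fun k => (hterm w₁ k).symm, tsum_congr fun k => (hterm w₂ k).symm]

lemma norm_le_nA {L κ₀ : ℝ} (hL : 0 < L) (hκ : 0 < κ₀) {w : ℤ × ℤ → Vc} {α : ℕ}
    (hS : SummableA κ₀ w α) (k : ℤ × ℤ) :
    L * (κ₀ * knorm k) ^ α * ‖w k‖ ≤ nA L κ₀ w α := by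
  have h1 : (κ₀ * knorm k) ^ (2*α) * ‖w k‖ ^ 2 ≤ ∑' j, (κ₀ * knorm j) ^ (2*α) * ‖w j‖ ^ 2 :=
    Summable.le_tsum hS k fun j _ => sqA_term_nonneg κ₀ w α j
  have h2 : L^2 * ((κ₀ * knorm k) ^ (2*α) * ‖w k‖ ^ 2) ≤ sqA L κ₀ w α :=
    mul_le_mul_of_nonneg_left h1 (sq_nonneg L)
  have h3 : (L * (κ₀ * knorm k) ^ α * ‖w k‖)^2 = L^2 * ((κ₀ * knorm k) ^ (2*α) * ‖w k‖ ^ 2) := by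
    have habs : ((κ₀ * knorm k) ^ α) ^ 2 = (κ₀ * knorm k) ^ (2*α) := by
      rw [← pow_mul, mul_comm α 2]
    rw [← habs]
    ring
  have h4 : 0 ≤ L * (κ₀ * knorm k) ^ α * ‖w k‖ := by
    have hk0 : 0 ≤ κ₀ * knorm k := mul_nonneg hκ.le (knorm_nonneg k)
    exact mul_nonneg (mul_nonneg hL.le (pow_nonneg hk0 α)) (norm_nonneg _)
  calc L * (κ₀ * knorm k) ^ α * ‖w k‖
      = Real.sqrt ((L * (κ₀ * knorm k) ^ α * ‖w k‖)^2) := (Real.sqrt_sq h4).symm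
    _ ≤ Real.sqrt (sqA L κ₀ w α) := Real.sqrt_le_sqrt (by rw [h3]; exact h2)

lemma ratio_nonneg {t : ℝ} (ht : 0 ≤ t) : 0 ≤ t / (1 + t) :=
  div_nonneg ht (by linarith)

lemma ratio_le_one {t : ℝ} (ht : 0 ≤ t) : t / (1 + t) ≤ 1 := by
  rw [div_le_one (by linarith)]
  linarith

lemma ratio_le_self {t : ℝ} (ht : 0 ≤ t) : t / (1 + t) ≤ t := by
  rw [div_le_iff₀ (by linarith)]
  nlinarith

lemma ratio_mono {s t : ℝ} (hs : 0 ≤ s) (h : s ≤ t) : s / (1 + s) ≤ t / (1 + t) := by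
  rw [div_le_div_iff₀ (by linarith) (by linarith)]
  nlinarith

lemma ratio_subadd {s t : ℝ} (hs : 0 ≤ s) (ht : 0 ≤ t) :
    (s + t) / (1 + (s + t)) ≤ s / (1 + s) + t / (1 + t) := by
  have h1 : (0:ℝ) < 1 + s := by linarith
  have h2 : (0:ℝ) < 1 + t := by linarith
  have h3 : (0:ℝ) < 1 + (s + t) := by linarith
  rw [div_add_div _ _ h1.ne' h2.ne', div_le_div_iff₀ h3 (by positivity)]
  nlinarith [mul_nonneg hs ht, mul_nonneg (mul_nonneg hs ht) hs, mul_nonneg (mul_nonneg hs ht) ht]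

lemma dF_summand_nonneg (L κ₀ : ℝ) (x y : Fs L κ₀) (α : ℕ) :
    0 ≤ (1 / 2 ^ (α + 1) : ℝ) *
      (nA L κ₀ (fun k => x.1 k - y.1 k) (α + 1) /
        (1 + nA L κ₀ (fun k => x.1 k - y.1 k) (α + 1))) :=
  mul_nonneg (by positivity) (ratio_nonneg (nA_nonneg _ _ _ _))

lemma dF_summand_le (L κ₀ : ℝ) (x y : Fs L κ₀) (α : ℕ) :
    (1 / 2 ^ (α + 1) : ℝ) *
      (nA L κ₀ (fun k => x.1 k - y.1 k) (α + 1) /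
        (1 + nA L κ₀ (fun k => x.1 k - y.1 k) (α + 1))) ≤ (1/2:ℝ)^(α+1) := by
  rw [div_pow, one_pow]
  calc (1 / 2 ^ (α + 1) : ℝ) * (nA L κ₀ (fun k => x.1 k - y.1 k) (α + 1) /
        (1 + nA L κ₀ (fun k => x.1 k - y.1 k) (α + 1)))
      ≤ (1 / 2 ^ (α + 1) : ℝ) * 1 :=
        mul_le_mul_of_nonneg_left (ratio_le_one (nA_nonneg _ _ _ _)) (by positivity)
    _ = 1 / 2 ^ (α + 1) := mul_one _

lemma dF_summand_summable (L κ₀ : ℝ) (x y : Fs L κ₀) :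
    Summable (fun α : ℕ => (1 / 2 ^ (α + 1) : ℝ) *
      (nA L κ₀ (fun k => x.1 k - y.1 k) (α + 1) /
        (1 + nA L κ₀ (fun k => x.1 k - y.1 k) (α + 1)))) := by
  refine Summable.of_nonneg_of_le (dF_summand_nonneg L κ₀ x y) (fun α => ?_)
    (summable_geometric_of_lt_one (by norm_num) (by norm_num : (1/2:ℝ) < 1))
  refine le_trans (dF_summand_le L κ₀ x y α) ?_
  calc ((1:ℝ)/2)^(α+1) = (1/2:ℝ)^α * (1/2) := by rw [pow_succ]
    _ ≤ (1/2:ℝ)^α * 1 := by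
        refine mul_le_mul_of_nonneg_left (by norm_num) (by positivity)
    _ = (1/2:ℝ)^α := mul_one _

lemma dF_nonneg (L κ₀ : ℝ) (x y : Fs L κ₀) : 0 ≤ dF L κ₀ x y :=
  tsum_nonneg (dF_summand_nonneg L κ₀ x y)

lemma dF_self (L κ₀ : ℝ) (x : Fs L κ₀) : dF L κ₀ x x = 0 := by
  have h : ∀ α : ℕ, nA L κ₀ (fun _ : ℤ × ℤ => (0 : Vc)) α = 0 := by
    intro α
    simp [nA, sqA]
  simp [dF, h]

lemma dF_triangle (L κ₀ : ℝ) (hL : 0 ≤ L) (x y z : Fs L κ₀) :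
    dF L κ₀ x z ≤ dF L κ₀ x y + dF L κ₀ y z := by
  rw [dF, dF, dF, ← Summable.tsum_add (dF_summand_summable L κ₀ x y) (dF_summand_summable L κ₀ y z)]
  refine Summable.tsum_le_tsum (fun α => ?_) (dF_summand_summable L κ₀ x z)
    ((dF_summand_summable L κ₀ x y).add (dF_summand_summable L κ₀ y z))
  set a := nA L κ₀ (fun k => x.1 k - z.1 k) (α+1) with ha
  set a1 := nA L κ₀ (fun k => x.1 k - y.1 k) (α+1) with ha1
  set a2 := nA L κ₀ (fun k => y.1 k - z.1 k) (α+1) with ha2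
  have ha0 : 0 ≤ a := nA_nonneg _ _ _ _
  have ha10 : 0 ≤ a1 := nA_nonneg _ _ _ _
  have ha20 : 0 ≤ a2 := nA_nonneg _ _ _ _
  have hsub : a ≤ a1 + a2 := by
    have heq : (fun k => x.1 k - z.1 k) =
        fun k => (x.1 k - y.1 k) + (y.1 k - z.1 k) := by
      funext k
      abel
    rw [ha, heq]
    exact nA_add_le L κ₀ hL _ _ (α+1) ((x.2.2 (α+1)).sub' (y.2.2 (α+1)))
      ((y.2.2 (α+1)).sub' (z.2.2 (α+1)))
  have h1 : a / (1 + a) ≤ a1 / (1 + a1) + a2 / (1 + a2) :=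
    le_trans (ratio_mono ha0 hsub) (ratio_subadd ha10 ha20)
  calc (1 / 2 ^ (α + 1) : ℝ) * (a / (1 + a))
      ≤ (1 / 2 ^ (α + 1) : ℝ) * (a1 / (1 + a1) + a2 / (1 + a2)) :=
        mul_le_mul_of_nonneg_left h1 (by positivity)
    _ = (1 / 2 ^ (α + 1) : ℝ) * (a1 / (1 + a1)) + (1 / 2 ^ (α + 1) : ℝ) * (a2 / (1 + a2)) := by
        ring

lemma ball_isOpen (L κ₀ : ℝ) (x : Fs L κ₀) (r : ℝ) :
    IsOpen {y : Fs L κ₀ | dF L κ₀ x y < r} :=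
  TopologicalSpace.GenerateOpen.basic _ ⟨x, r, rfl⟩

lemma exists_ball_subset (L κ₀ : ℝ) (hL : 0 ≤ L) {U : Set (Fs L κ₀)} (hU : IsOpen U) :
    ∀ x ∈ U, ∃ δ > (0:ℝ), {y : Fs L κ₀ | dF L κ₀ x y < δ} ⊆ U := by
  have hU' : TopologicalSpace.GenerateOpen
      {B | ∃ x : Fs L κ₀, ∃ r : ℝ, B = {y : Fs L κ₀ | dF L κ₀ x y < r}} U := hU
  clear hU
  induction hU' with
  | basic B hB =>
    obtain ⟨z, r, rfl⟩ := hB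
    intro x hx
    have hx' : dF L κ₀ z x < r := hx
    refine ⟨r - dF L κ₀ z x, by linarith, fun y hy => ?_⟩
    have hy' : dF L κ₀ x y < r - dF L κ₀ z x := hy
    have htri := dF_triangle L κ₀ hL z x y
    show dF L κ₀ z y < r
    linarith
  | univ => exact fun x _ => ⟨1, one_pos, fun y _ => trivial⟩
  | inter s t _ _ ihs iht =>
    intro x hx
    obtain ⟨δ1, h1, hs1⟩ := ihs x hx.1
    obtain ⟨δ2, h2, hs2⟩ := iht x hx.2
    refine ⟨min δ1 δ2, lt_min h1 h2, fun y hy => ?_⟩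
    have hy' : dF L κ₀ x y < min δ1 δ2 := hy
    exact ⟨hs1 (lt_of_lt_of_le hy' (min_le_left _ _)), hs2 (lt_of_lt_of_le hy' (min_le_right _ _))⟩
  | sUnion S _ ih =>
    intro x hx
    obtain ⟨s, hsS, hxs⟩ := hx
    obtain ⟨δ, hδ, hsub⟩ := ih s hsS x hxs
    exact ⟨δ, hδ, hsub.trans (Set.subset_sUnion_of_mem hsS)⟩

lemma continuous_eval {L κ₀ : ℝ} (hL : 0 < L) (hκ : 0 < κ₀) (k : ℤ × ℤ) :
    Continuous fun u : Fs L κ₀ => u.1 k := by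
  rcases eq_or_ne k 0 with rfl | hk
  · have h : (fun u : Fs L κ₀ => u.1 0) = fun _ => (0 : Vc) := funext fun u => u.2.1.1
    rw [h]
    exact continuous_const
  · rw [continuous_iff_continuousAt]
    intro x
    rw [ContinuousAt, Metric.tendsto_nhds]
    intro ε hε
    have hK : 0 < knorm k := knorm_pos hk
    have hP : 0 < L * (κ₀ * knorm k) := mul_pos hL (mul_pos hκ hK)
    set s : ℝ := ε * (L * (κ₀ * knorm k)) with hs
    have hs0 : 0 < s := mul_pos hε hP
    set δ : ℝ := (1/2) * (s / (1 + s)) with hδdef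
    have hδ : 0 < δ := by
      have hr : 0 < s / (1 + s) := div_pos hs0 (by linarith)
      exact mul_pos (by norm_num) hr
    have hopen := ball_isOpen L κ₀ x δ
    have hmem : x ∈ {y : Fs L κ₀ | dF L κ₀ x y < δ} := by
      show dF L κ₀ x x < δ
      rw [dF_self]
      exact hδ
    refine Filter.eventually_of_mem (hopen.mem_nhds hmem) ?_
    intro y hy
    have hy' : dF L κ₀ x y < δ := hy
    have hw : ∀ α, SummableA κ₀ (fun j => x.1 j - y.1 j) α :=
      fun α => (x.2.2 α).sub' (y.2.2 α)
    set t := nA L κ₀ (fun j => x.1 j - y.1 j) 1 with htdef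
    have ht0 : 0 ≤ t := nA_nonneg _ _ _ _
    have hfirst : (1/2 : ℝ) * (t / (1 + t)) ≤ dF L κ₀ x y := by
      have h := Summable.le_tsum (dF_summand_summable L κ₀ x y) 0
        (fun j _ => dF_summand_nonneg L κ₀ x y j)
      have hdF : dF L κ₀ x y = ∑' α : ℕ, (1 / 2 ^ (α + 1) : ℝ) *
        (nA L κ₀ (fun k => x.1 k - y.1 k) (α + 1) /
          (1 + nA L κ₀ (fun k => x.1 k - y.1 k) (α + 1))) := rfl
      rw [hdF]
      simpa using h
    have hratio : t / (1+t) < s / (1+s) := by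
      have h2 : (1/2:ℝ) * (t/(1+t)) < (1/2) * (s/(1+s)) := lt_of_le_of_lt hfirst hy'
      linarith
    have hts : t < s := by
      by_contra h
      push_neg at h
      exact absurd (ratio_mono hs0.le h) (not_le.2 hratio)
    have hbound := norm_le_nA hL hκ (hw 1) k
    rw [pow_one] at hbound
    rw [dist_eq_norm]
    have hrev : ‖y.1 k - x.1 k‖ = ‖x.1 k - y.1 k‖ := norm_sub_rev _ _
    rw [hrev]
    have hb2 : L * (κ₀ * knorm k) * ‖x.1 k - y.1 k‖ < ε * (L * (κ₀ * knorm k)) := by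
      calc L * (κ₀ * knorm k) * ‖x.1 k - y.1 k‖ ≤ t := hbound
        _ < s := hts
        _ = ε * (L * (κ₀ * knorm k)) := hs
    nlinarith [norm_nonneg (x.1 k - y.1 k)]

lemma ebTerm_nonneg (b : ℝ) (u : ℤ × ℤ → Vc) (k : ℤ × ℤ) : 0 ≤ ebTerm b u k :=
  mul_nonneg (Real.exp_pos _).le (sq_nonneg _)

lemma Fn_closed {L κ₀ : ℝ} (hL : 0 < L) (hκ : 0 < κ₀) (b : ℝ) (n : ℕ) :
    IsClosed {u : Fs L κ₀ | ∀ S : Finset (ℤ × ℤ), L^2 * ∑ k ∈ S, ebTerm b u.1 k ≤ (n:ℝ)} := by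
  have heq : {u : Fs L κ₀ | ∀ S : Finset (ℤ × ℤ), L^2 * ∑ k ∈ S, ebTerm b u.1 k ≤ (n:ℝ)}
      = ⋂ S : Finset (ℤ × ℤ), {u : Fs L κ₀ | L^2 * ∑ k ∈ S, ebTerm b u.1 k ≤ (n:ℝ)} := by
    ext u
    simp [Set.mem_iInter]
  rw [heq]
  refine isClosed_iInter fun S => ?_
  have hcont : Continuous fun u : Fs L κ₀ => L^2 * ∑ k ∈ S, ebTerm b u.1 k := by
    refine Continuous.mul continuous_const ?_
    refine continuous_finset_sum S fun k _ => ?_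
    have : (fun u : Fs L κ₀ => ebTerm b u.1 k) =
        fun u : Fs L κ₀ =>
          Real.exp (2 * b * (Real.log (knorm k + Real.exp 1)) ^ 2) * ‖u.1 k‖ ^ 2 := rfl
    rw [this]
    exact Continuous.mul continuous_const (((continuous_eval hL hκ k).norm).pow 2)
  exact isClosed_le hcont continuous_const

end Aux

section Perturb

open Real Finset

lemma exists_perturb {L κ₀ : ℝ} (hL : 0 < L) (hκ : 0 < κ₀) (b : ℝ) (hb : 0 < b)
    (x : Fs L κ₀) (δ : ℝ) (hδ : 0 < δ) (n : ℕ) :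
    ∃ y : Fs L κ₀, dF L κ₀ x y < δ ∧
      ∃ S : Finset (ℤ × ℤ), (n:ℝ) < L^2 * ∑ k ∈ S, ebTerm b y.1 k := by
  obtain ⟨N, hN⟩ : ∃ N : ℕ, (1/2:ℝ)^N < δ/2 :=
    exists_pow_lt_of_lt_one (by linarith) (by norm_num)
  have hsq2 : (0:ℝ) < Real.sqrt 2 := Real.sqrt_pos.2 (by norm_num)
  set D : ℝ := δ / (4 * (N+1) * (Real.sqrt 2 * L)) with hD_def
  have hD : 0 < D := by
    apply div_pos hδ
    positivity
  set C : ℝ := nA L κ₀ x.1 (N+1) with hC_def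
  have hC0 : 0 ≤ C := nA_nonneg _ _ _ _
  set M : ℝ := Real.log (2 * Real.sqrt ((n:ℝ)+1) * κ₀^N / (D*L)) with hM_def
  set T : ℝ := max (max (((N:ℝ)+1)/b) (|M|+1)) 1 with hT_def
  obtain ⟨j, hj⟩ := exists_nat_ge (max (max (Real.exp T) (1/κ₀)) (2*C/(D*L*κ₀)))
  have hj1 : Real.exp T ≤ (j:ℝ) := le_trans (le_trans (le_max_left _ _) (le_max_left _ _)) hj
  have hj2 : 1/κ₀ ≤ (j:ℝ) := le_trans (le_trans (le_max_right _ _) (le_max_left _ _)) hj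
  have hj3 : 2*C/(D*L*κ₀) ≤ (j:ℝ) := le_trans (le_max_right _ _) hj
  have hjpos : 0 < (j:ℝ) := lt_of_lt_of_le (Real.exp_pos T) hj1
  have hjZ : 0 < (j:ℤ) := by exact_mod_cast hjpos
  set p : ℤ × ℤ := ((j:ℤ), 0) with hp_def
  have hknorm : knorm p = (j:ℝ) := by
    rw [knorm, hp_def]
    push_cast
    rw [show ((j:ℝ))^2 + 0^2 = (j:ℝ)^2 by ring]
    exact Real.sqrt_sq hjpos.le
  have hp0 : p ≠ 0 := by
    intro h
    rw [hp_def, Prod.ext_iff] at h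
    exact absurd h.1 hjZ.ne'
  have hpne : p ≠ -p := by
    intro h
    rw [hp_def, Prod.ext_iff] at h
    simp only [Prod.fst_neg] at h
    omega
  have hnegp0 : -p ≠ 0 := by
    simpa using hp0
  have hκj : 1 ≤ κ₀ * (j:ℝ) := by
    rw [div_le_iff₀ hκ] at hj2
    linarith [hj2]
  have hκj0 : 0 < κ₀ * (j:ℝ) := by linarith
  set t : ℝ := Real.log ((j:ℝ) + Real.exp 1) with ht_def
  have hjepos : 0 < (j:ℝ) + Real.exp 1 := by positivity
  have hTt : T ≤ t := by
    rw [ht_def, Real.le_log_iff_exp_le hjepos]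
    linarith [Real.exp_pos 1]
  have ht1 : 1 ≤ t := le_trans (le_max_right _ _) hTt
  have htb : ((N:ℝ)+1)/b ≤ t := le_trans (le_trans (le_max_left _ _) (le_max_left _ _)) hTt
  have htM : |M|+1 ≤ t := le_trans (le_trans (le_max_right _ _) (le_max_left _ _)) hTt
  have hjle : (j:ℝ) ≤ Real.exp t := by
    rw [ht_def, Real.exp_log hjepos]
    linarith [Real.exp_pos 1]
  set c : ℝ := D / (κ₀ * (j:ℝ))^N with hc_def
  have hpowpos : 0 < (κ₀ * (j:ℝ))^N := pow_pos hκj0 N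
  have hc : 0 < c := div_pos hD hpowpos
  -- coefficient of x at p is small
  have hxp : ‖x.1 p‖ ≤ c/2 := by
    have h1 : L * (κ₀ * (j:ℝ))^(N+1) * ‖x.1 p‖ ≤ C := by
      have := norm_le_nA hL hκ (x.2.2 (N+1)) p
      rwa [hknorm] at this
    have h2 : 2*C ≤ (j:ℝ) * (D*L*κ₀) := by
      rw [div_le_iff₀ (by positivity)] at hj3
      linarith
    have hP : 0 < L * (κ₀ * (j:ℝ))^(N+1) := by positivity
    have h3 : L * (κ₀ * (j:ℝ))^(N+1) * ‖x.1 p‖ ≤ L * (κ₀ * (j:ℝ))^(N+1) * (c/2) := by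
      have heq : L * (κ₀ * (j:ℝ))^(N+1) * (c/2) = (j:ℝ) * (D*L*κ₀) / 2 := by
        rw [hc_def, pow_succ]
        field_simp
      rw [heq]
      linarith
    exact le_of_mul_le_mul_left h3 hP
  -- growth estimate
  have hBB : Real.sqrt ((n:ℝ)+1) ≤ L * Real.exp (b*t^2) * (c/2) := by
    have hsn : 0 ≤ Real.sqrt ((n:ℝ)+1) := Real.sqrt_nonneg _
    have hsnpos : 0 < Real.sqrt ((n:ℝ)+1) := Real.sqrt_pos.2 (by positivity)
    have e1 : Real.exp M = 2 * Real.sqrt ((n:ℝ)+1) * κ₀^N / (D*L) := by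
      rw [hM_def, Real.exp_log (by positivity)]
    have harg : (N:ℝ)*t + M ≤ b*t^2 := by
      have hbt : (N:ℝ)+1 ≤ b*t := by
        rw [div_le_iff₀ hb] at htb
        linarith
      have hMle : M ≤ |M| := le_abs_self M
      nlinarith [mul_le_mul_of_nonneg_left hbt (by linarith : (0:ℝ) ≤ t)]
    have e3 : Real.exp ((N:ℝ)*t + M) ≤ Real.exp (b*t^2) := Real.exp_le_exp.2 harg
    have key : Real.sqrt ((n:ℝ)+1) * (κ₀ * (j:ℝ))^N ≤ L * Real.exp (b*t^2) * D / 2 := by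
      have e2 : (κ₀ * (j:ℝ))^N ≤ κ₀^N * Real.exp ((N:ℝ)*t) := by
        have : Real.exp ((N:ℝ)*t) = Real.exp t ^ N := Real.exp_nat_mul t N
        rw [this, ← mul_pow]
        exact pow_le_pow_left₀ hκj0.le (mul_le_mul_of_nonneg_left hjle hκ.le) N
      have e5 : Real.sqrt ((n:ℝ)+1) * κ₀^N = Real.exp M * (D*L) / 2 := by
        rw [e1]
        field_simp
      calc Real.sqrt ((n:ℝ)+1) * (κ₀ * (j:ℝ))^N
          ≤ Real.sqrt ((n:ℝ)+1) * (κ₀^N * Real.exp ((N:ℝ)*t)) :=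
            mul_le_mul_of_nonneg_left e2 hsn
        _ = (Real.sqrt ((n:ℝ)+1) * κ₀^N) * Real.exp ((N:ℝ)*t) := by ring
        _ = Real.exp M * (D*L) / 2 * Real.exp ((N:ℝ)*t) := by rw [e5]
        _ = Real.exp ((N:ℝ)*t + M) * (D*L) / 2 := by rw [Real.exp_add]; ring
        _ ≤ Real.exp (b*t^2) * (D*L) / 2 := by
            have hDL : 0 ≤ D*L := by positivity
            nlinarith [e3]
        _ = L * Real.exp (b*t^2) * D / 2 := by ring
    have heq2 : L * Real.exp (b*t^2) * (c/2) = (L * Real.exp (b*t^2) * D / 2) / (κ₀ * (j:ℝ))^N := by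
      rw [hc_def]
      field_simp
    rw [heq2, le_div_iff₀ hpowpos]
    exact key
  -- the perturbation vector
  set v : Vc := EuclideanSpace.single (1 : Fin 2) ((c:ℝ) : ℂ) with hv_def
  have hv0 : v 0 = 0 := by
    rw [hv_def, EuclideanSpace.single_apply]
    norm_num
  have hv1 : v 1 = ((c:ℝ) : ℂ) := by
    rw [hv_def, EuclideanSpace.single_apply]
    norm_num
  have hnormv : ‖v‖ = c := by
    rw [hv_def, EuclideanSpace.norm_single]
    simp [abs_of_pos hc]
  have hconjv : ∀ i : Fin 2, (starRingEnd ℂ) (v i) = v i := by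
    intro i
    rw [hv_def, EuclideanSpace.single_apply]
    split
    · exact Complex.conj_ofReal _
    · exact map_zero _
  set m : (ℤ × ℤ) → Vc := fun k => if k = p ∨ k = -p then v else 0 with hm_def
  have hm_p : m p = v := if_pos (Or.inl rfl)
  have hm_negp : m (-p) = v := if_pos (Or.inr rfl)
  have hm_other : ∀ k : ℤ × ℤ, k ≠ p → k ≠ -p → m k = 0 := by
    intro k h1 h2
    exact if_neg (by tauto)
  have hmneg : ∀ k : ℤ × ℤ, m (-k) = m k := by
    intro k
    have hiff : (-k = p ∨ -k = -p) ↔ (k = p ∨ k = -p) := by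
      constructor
      · rintro (h | h)
        · right; rw [← h, neg_neg]
        · left; exact neg_injective h
      · rintro (h | h)
        · right; rw [h]
        · left; rw [h, neg_neg]
    show (if -k = p ∨ -k = -p then v else 0) = (if k = p ∨ k = -p then v else 0)
    by_cases h : k = p ∨ k = -p
    · rw [if_pos (hiff.2 h), if_pos h]
    · rw [if_neg (fun hh => h (hiff.1 hh)), if_neg h]
  set y0 : (ℤ × ℤ) → Vc := fun k => x.1 k + m k with hy0_def
  -- membership in H
  have hy0_zero : y0 0 = 0 := by
    show x.1 0 + m 0 = 0
    rw [x.2.1.1, hm_other 0 (Ne.symm hp0) (Ne.symm hnegp0), add_zero]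
  have happ : ∀ (a b : Vc) (i : Fin 2), (a + b) i = a i + b i := fun a b i => rfl
  have hy0_real : IsRealCond y0 := by
    intro k i
    show (x.1 (-k) + m (-k)) i = starRingEnd ℂ ((x.1 k + m k) i)
    rw [happ, happ, map_add, x.2.1.2.1 k i, hmneg k]
    congr 1
    by_cases h : k = p ∨ k = -p
    · have hmk : m k = v := if_pos h
      rw [hmk]
      exact (hconjv i).symm
    · push_neg at h
      rw [hm_other k h.1 h.2]
      simp
  have hmdiv : ∀ k : ℤ × ℤ, (k.1:ℂ) * m k 0 + (k.2:ℂ) * m k 1 = 0 := by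
    intro k
    by_cases h : k = p ∨ k = -p
    · have hmk : m k = v := if_pos h
      have hk2 : k.2 = 0 := by
        rcases h with rfl | rfl
        · rfl
        · rfl
      rw [hmk, hv0, hk2]
      simp
    · push_neg at h
      rw [hm_other k h.1 h.2]
      simp
  have hy0_div : DivFree y0 := by
    intro k
    have hx := x.2.1.2.2 k
    have hm := hmdiv k
    show (k.1:ℂ) * (x.1 k + m k) 0 + (k.2:ℂ) * (x.1 k + m k) 1 = 0
    rw [happ, happ]
    linear_combination hx + hm
  -- summability
  have hy0_summ : ∀ α : ℕ, SummableA κ₀ y0 α := by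
    intro α
    have hx := x.2.2 α
    have hdiff : Summable (fun k => (κ₀ * knorm k)^(2*α) * ‖y0 k‖^2
        - (κ₀ * knorm k)^(2*α) * ‖x.1 k‖^2) := by
      refine summable_of_ne_finset_zero (s := ({p, -p} : Finset (ℤ × ℤ))) ?_
      intro k hk
      simp only [Finset.mem_insert, Finset.mem_singleton] at hk
      push_neg at hk
      have : y0 k = x.1 k := by
        show x.1 k + m k = x.1 k
        rw [hm_other k hk.1 hk.2, add_zero]
      rw [this, sub_self]
    exact (hx.add hdiff).congr (fun k => by ring)
  set y : Fs L κ₀ := ⟨y0, ⟨hy0_zero, hy0_real, hy0_div⟩, hy0_summ⟩ with hy_def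
  have hy1 : y.1 = y0 := rfl
  -- norm of difference
  have hwnorm : ∀ k : ℤ × ℤ, ‖x.1 k - y0 k‖ = ‖m k‖ := by
    intro k
    show ‖x.1 k - (x.1 k + m k)‖ = ‖m k‖
    rw [sub_add_cancel_left, norm_neg]
  have hknorm_neg : knorm (-p) = (j:ℝ) := by rw [knorm_neg, hknorm]
  have hsqA : ∀ α : ℕ, sqA L κ₀ (fun k => x.1 k - y0 k) α
      = L^2 * (2 * ((κ₀ * (j:ℝ))^(2*α) * c^2)) := by
    intro α
    rw [sqA]
    congr 1
    rw [tsum_eq_sum (s := ({p, -p} : Finset (ℤ × ℤ))) ?_]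
    · rw [Finset.sum_pair hpne]
      rw [hwnorm, hwnorm, hm_p, hm_negp, hnormv, hknorm, hknorm_neg]
      ring
    · intro k hk
      simp only [Finset.mem_insert, Finset.mem_singleton] at hk
      push_neg at hk
      rw [hwnorm, hm_other k hk.1 hk.2]
      simp
  have hnA : ∀ α : ℕ, nA L κ₀ (fun k => x.1 k - y0 k) α
      = Real.sqrt 2 * L * c * (κ₀ * (j:ℝ))^α := by
    intro α
    have hnn : 0 ≤ Real.sqrt 2 * L * c * (κ₀ * (j:ℝ))^α :=
      mul_nonneg (mul_nonneg (mul_nonneg (Real.sqrt_nonneg 2) hL.le) hc.le)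
        (pow_nonneg hκj0.le α)
    have h2 : (2:ℝ) = Real.sqrt 2 ^ 2 := (Real.sq_sqrt (by norm_num : (0:ℝ) ≤ 2)).symm
    have hsqeq : L^2 * (2 * ((κ₀ * (j:ℝ))^(2*α) * c^2))
        = (Real.sqrt 2 * L * c * (κ₀ * (j:ℝ))^α)^2 := by
      linear_combination (L^2 * c^2 * (κ₀ * (j:ℝ))^(2*α)) * h2
    rw [nA, hsqA, hsqeq]
    exact Real.sqrt_sq hnn
  -- distance estimate
  have hdist : dF L κ₀ x y < δ := by
    have hsum := dF_summand_summable L κ₀ x y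
    set f : ℕ → ℝ := fun α => (1 / 2 ^ (α + 1) : ℝ) *
      (nA L κ₀ (fun k => x.1 k - y.1 k) (α + 1) /
        (1 + nA L κ₀ (fun k => x.1 k - y.1 k) (α + 1))) with hf_def
    have hdF : dF L κ₀ x y = ∑' α, f α := rfl
    have hfle2 : ∀ α : ℕ, α + 1 ≤ N → f α ≤ δ/(4*((N:ℝ)+1)) := by
      intro α hα
      have hr : nA L κ₀ (fun k => x.1 k - y.1 k) (α + 1)
          = Real.sqrt 2 * L * c * (κ₀ * (j:ℝ))^(α+1) := hnA (α+1)
      have hr0 : 0 ≤ nA L κ₀ (fun k => x.1 k - y.1 k) (α + 1) := nA_nonneg _ _ _ _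
      have step1 : f α ≤ nA L κ₀ (fun k => x.1 k - y.1 k) (α + 1) := by
        rw [hf_def]
        simp only []
        calc (1 / 2 ^ (α + 1) : ℝ) * (nA L κ₀ (fun k => x.1 k - y.1 k) (α + 1) /
              (1 + nA L κ₀ (fun k => x.1 k - y.1 k) (α + 1)))
            ≤ 1 * (nA L κ₀ (fun k => x.1 k - y.1 k) (α + 1) /
              (1 + nA L κ₀ (fun k => x.1 k - y.1 k) (α + 1))) := by
              refine mul_le_mul_of_nonneg_right ?_ (ratio_nonneg hr0)
              rw [div_le_one (by positivity)]
              exact one_le_pow₀ (by norm_num)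
          _ = _ := by rw [one_mul]
          _ ≤ nA L κ₀ (fun k => x.1 k - y.1 k) (α + 1) := ratio_le_self hr0
      have step2 : Real.sqrt 2 * L * c * (κ₀ * (j:ℝ))^(α+1)
          ≤ Real.sqrt 2 * L * c * (κ₀ * (j:ℝ))^N := by
        refine mul_le_mul_of_nonneg_left (pow_le_pow_right₀ hκj hα)
          (mul_nonneg (mul_nonneg (Real.sqrt_nonneg 2) hL.le) hc.le)
      have step3 : Real.sqrt 2 * L * c * (κ₀ * (j:ℝ))^N = δ/(4*((N:ℝ)+1)) := by
        rw [hc_def, hD_def]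
        field_simp
      rw [hr] at step1
      linarith
    have hsplit := (Summable.sum_add_tsum_nat_add N hsum).symm
    have hhead : ∑ α ∈ Finset.range N, f α ≤ δ/4 := by
      have h1 : ∑ α ∈ Finset.range N, f α ≤ ∑ α ∈ Finset.range N, δ/(4*((N:ℝ)+1)) := by
        refine Finset.sum_le_sum fun α hα => ?_
        exact hfle2 α (by
          have := Finset.mem_range.1 hα
          omega)
      rw [Finset.sum_const, Finset.card_range, nsmul_eq_mul] at h1
      have h2 : (N:ℝ) * (δ/(4*((N:ℝ)+1))) ≤ δ/4 := by
        rw [← mul_div_assoc, div_le_div_iff₀ (by positivity) (by norm_num : (0:ℝ) < 4)]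
        nlinarith [hδ, Nat.cast_nonneg (α := ℝ) N]
      linarith
    have htail : ∑' α : ℕ, f (α + N) ≤ (1/2:ℝ)^N := by
      have hfb : ∀ α : ℕ, f (α + N) ≤ (1/2:ℝ)^α * (1/2:ℝ)^(N+1) := by
        intro α
        have := dF_summand_le L κ₀ x y (α + N)
        rw [hf_def]
        refine le_trans this ?_
        refine le_of_eq ?_
        rw [← pow_add, add_assoc]
      have hgeo : Summable (fun α : ℕ => (1/2:ℝ)^α * (1/2:ℝ)^(N+1)) :=
        (summable_geometric_of_lt_one (by norm_num) (by norm_num)).mul_right _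
      calc ∑' α : ℕ, f (α + N) ≤ ∑' α : ℕ, (1/2:ℝ)^α * (1/2:ℝ)^(N+1) :=
            Summable.tsum_le_tsum hfb ((summable_nat_add_iff N).2 hsum) hgeo
        _ = (∑' α : ℕ, (1/2:ℝ)^α) * (1/2:ℝ)^(N+1) := tsum_mul_right
        _ = 2 * (1/2:ℝ)^(N+1) := by
            rw [tsum_geometric_of_lt_one (by norm_num) (by norm_num)]
            norm_num
        _ = (1/2:ℝ)^N := by
            rw [pow_succ]
            ring
    rw [hdF, hsplit]
    have : ∑' α : ℕ, f (α + N) ≤ (1/2:ℝ)^N := htail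
    linarith
  -- violation at p
  refine ⟨y, hdist, {p}, ?_⟩
  rw [Finset.sum_singleton]
  have hyp : y.1 p = x.1 p + v := by
    show x.1 p + m p = x.1 p + v
    rw [hm_p]
  have hlow : c/2 ≤ ‖y.1 p‖ := by
    have h1 : ‖v‖ ≤ ‖x.1 p + v‖ + ‖x.1 p‖ := by
      calc ‖v‖ = ‖x.1 p + v - x.1 p‖ := by rw [add_sub_cancel_left]
        _ ≤ ‖x.1 p + v‖ + ‖x.1 p‖ := norm_sub_le _ _
    rw [hyp]
    rw [hnormv] at h1
    linarith
  have hterm : ebTerm b y.1 p = Real.exp (2*b*t^2) * ‖y.1 p‖^2 := by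
    rw [ebTerm, hknorm, ht_def]
  have hsq : Real.exp (2*b*t^2) * (c/2)^2 ≤ Real.exp (2*b*t^2) * ‖y.1 p‖^2 := by
    refine mul_le_mul_of_nonneg_left ?_ (Real.exp_pos _).le
    exact pow_le_pow_left₀ (by positivity) hlow 2
  have hn1 : (n:ℝ) + 1 ≤ L^2 * (Real.exp (2*b*t^2) * (c/2)^2) := by
    have hsqr := pow_le_pow_left₀ (Real.sqrt_nonneg ((n:ℝ)+1)) hBB 2
    rw [Real.sq_sqrt (by positivity : (0:ℝ) ≤ (n:ℝ)+1)] at hsqr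
    have heq : (L * Real.exp (b*t^2) * (c/2))^2 = L^2 * (Real.exp (2*b*t^2) * (c/2)^2) := by
      rw [show (2:ℝ)*b*t^2 = b*t^2 + b*t^2 by ring, Real.exp_add]
      ring
    linarith [heq ▸ hsqr]
  have hfin : L^2 * (Real.exp (2*b*t^2) * (c/2)^2) ≤ L^2 * ebTerm b y.1 p := by
    rw [hterm]
    exact mul_le_mul_of_nonneg_left hsq (sq_nonneg L)
  linarith

end Perturb

/-- For every `b > 0`, the set `E_b = ∪_{n≥1} E_{b,n}` is of first
Baire category (meagre) in the metric space `(F, d)`. -/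
theorem Eb_meagre (L κ₀ : ℝ) (hL : 0 < L) (hκ₀ : κ₀ = 2 * Real.pi / L)
    (b : ℝ) (hb : 0 < b) :
    IsMeagre {u : Fs L κ₀ | Summable (ebTerm b u.1)} := by
  have hκ : 0 < κ₀ := by
    rw [hκ₀]
    positivity
  set Fn : ℕ → Set (Fs L κ₀) := fun n =>
    {u : Fs L κ₀ | ∀ S : Finset (ℤ × ℤ), L^2 * ∑ k ∈ S, ebTerm b u.1 k ≤ (n:ℝ)} with hFn_def
  have hsub : {u : Fs L κ₀ | Summable (ebTerm b u.1)} ⊆ ⋃ n, Fn n := by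
    intro u hu
    have hu' : Summable (ebTerm b u.1) := hu
    obtain ⟨n, hn⟩ := exists_nat_ge (L^2 * ∑' k, ebTerm b u.1 k)
    refine Set.mem_iUnion.2 ⟨n, fun S => ?_⟩
    have h1 : ∑ k ∈ S, ebTerm b u.1 k ≤ ∑' k, ebTerm b u.1 k :=
      Summable.sum_le_tsum S (fun k _ => ebTerm_nonneg b u.1 k) hu'
    have h2 : L^2 * ∑ k ∈ S, ebTerm b u.1 k ≤ L^2 * ∑' k, ebTerm b u.1 k :=
      mul_le_mul_of_nonneg_left h1 (sq_nonneg L)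
    linarith
  refine IsMeagre.mono hsub ?_
  refine isMeagre_iUnion fun n => ?_
  have hclosed : IsClosed (Fn n) := Fn_closed hL hκ b n
  have hint : interior (Fn n) = ∅ := by
    rw [Set.eq_empty_iff_forall_notMem]
    intro x hx
    obtain ⟨δ, hδ, hball⟩ := exists_ball_subset L κ₀ hL.le isOpen_interior x hx
    obtain ⟨y, hy1, S, hy2⟩ := exists_perturb hL hκ b hb x δ hδ n
    have hyF : y ∈ Fn n := interior_subset (hball hy1)
    exact absurd (hyF S) (not_le.2 hy2)
  have hnwd : IsNowhereDense (Fn n) := hclosed.isNowhereDense_iff.2 hint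
  rw [isMeagre_iff_countable_union_isNowhereDense]
  exact ⟨{Fn n}, by simpa using hnwd, Set.countable_singleton _, by simp⟩
end
end

section
/- For all real numbers s, t with 1 ≤ s ≤ t, one has (ln(s+t+e))² − (ln(t+e))² ≤ (ln(2s+e))² − (ln(s+e))² ≤ (ln 2)·(ln 2 + 2 ln(s+e)). -/
open Real

lemma aux_hasDerivAt (s x : ℝ) (h1 : 0 < s + x + Real.exp 1) (h2 : 0 < x + Real.exp 1) :
    HasDerivAt (fun y => Real.log (s + y + Real.exp 1) ^ 2 - Real.log (y + Real.exp 1) ^ 2)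
      (2 * (Real.log (s + x + Real.exp 1) / (s + x + Real.exp 1))
        - 2 * (Real.log (x + Real.exp 1) / (x + Real.exp 1))) x := by
  have d1 : HasDerivAt (fun y : ℝ => s + y + Real.exp 1) 1 x := by
    simpa using (((hasDerivAt_id x).const_add s).add_const (Real.exp 1))
  have d2 : HasDerivAt (fun y : ℝ => y + Real.exp 1) 1 x :=
    (hasDerivAt_id x).add_const (Real.exp 1)
  have l1 := (d1.log h1.ne').pow 2
  have l2 := (d2.log h2.ne').pow 2
  have := l1.sub l2
  refine this.congr_deriv ?_
  norm_num
  ring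

/-- For all real `1 ≤ s ≤ t`,
`(ln(s+t+e))² − (ln(t+e))² ≤ (ln(2s+e))² − (ln(s+e))² ≤ (ln 2)(ln 2 + 2 ln(s+e))`. -/
theorem log_sq_difference_bounds (s t : ℝ) (hs : 1 ≤ s) (hst : s ≤ t) :
    Real.log (s + t + Real.exp 1) ^ 2 - Real.log (t + Real.exp 1) ^ 2 ≤
      Real.log (2 * s + Real.exp 1) ^ 2 - Real.log (s + Real.exp 1) ^ 2 ∧
    Real.log (2 * s + Real.exp 1) ^ 2 - Real.log (s + Real.exp 1) ^ 2 ≤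
      Real.log 2 * (Real.log 2 + 2 * Real.log (s + Real.exp 1)) := by
  have he : (0:ℝ) < Real.exp 1 := Real.exp_pos 1
  constructor
  · -- antitone argument
    have key : AntitoneOn (fun y => Real.log (s + y + Real.exp 1) ^ 2
        - Real.log (y + Real.exp 1) ^ 2) (Set.Icc s t) := by
      apply antitoneOn_of_deriv_nonpos (convex_Icc s t)
      · apply ContinuousOn.sub
        · apply ContinuousOn.pow
          apply Real.continuousOn_log.comp (by fun_prop)
          intro y hy
          simp only [Set.mem_Icc] at hy
          have : (0:ℝ) < s + y + Real.exp 1 := by nlinarith [hy.1]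
          simpa using this.ne'
        · apply ContinuousOn.pow
          apply Real.continuousOn_log.comp (by fun_prop)
          intro y hy
          simp only [Set.mem_Icc] at hy
          have : (0:ℝ) < y + Real.exp 1 := by nlinarith [hy.1]
          simpa using this.ne'
      · intro x hx
        rw [interior_Icc] at hx
        have hx1 : s ≤ x := le_of_lt hx.1
        have h2 : (0:ℝ) < x + Real.exp 1 := by nlinarith
        have h1 : (0:ℝ) < s + x + Real.exp 1 := by nlinarith
        exact (aux_hasDerivAt s x h1 h2).differentiableAt.differentiableWithinAt
      · intro x hx
        rw [interior_Icc] at hx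
        have hx1 : s ≤ x := le_of_lt hx.1
        have h2 : (0:ℝ) < x + Real.exp 1 := by nlinarith
        have h1 : (0:ℝ) < s + x + Real.exp 1 := by nlinarith
        rw [(aux_hasDerivAt s x h1 h2).deriv]
        have hxe : Real.exp 1 ≤ x + Real.exp 1 := by nlinarith
        have hxe2 : x + Real.exp 1 ≤ s + x + Real.exp 1 := by nlinarith
        have := Real.log_div_self_antitoneOn hxe (le_trans hxe hxe2) hxe2
        linarith
    have := key (Set.left_mem_Icc.mpr hst) (Set.right_mem_Icc.mpr hst) hst
    simp only at this
    have h2s : s + s + Real.exp 1 = 2 * s + Real.exp 1 := by ring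
    rw [h2s] at this
    linarith
  · have hse : (0:ℝ) < s + Real.exp 1 := by nlinarith
    have h2se : (0:ℝ) < 2 * s + Real.exp 1 := by nlinarith
    have hle : Real.log (2 * s + Real.exp 1) ≤ Real.log 2 + Real.log (s + Real.exp 1) := by
      rw [← Real.log_mul (by norm_num) hse.ne']
      apply Real.log_le_log h2se
      nlinarith
    have hnn : 0 ≤ Real.log (2 * s + Real.exp 1) := by
      apply Real.log_nonneg; nlinarith
    nlinarith [sq_nonneg (Real.log (2 * s + Real.exp 1))]
end

section
/- Let V be a real vector space, A : V → V a linear map, B : V × V → V a bilinear map, g ∈ V, and λ, ν, δ₀ ∈ ℝ with A g = λ g and B(g,g) = 0. Define U : ℕ → V by U₀ = 0, U₁ = δ₀ g, U₂ = −(ν δ₀²/2) A g, and for N ≥ 2, U_{N+1} = ((N−1)/(N+1)) U_{N−1} − (ν δ₀/(N+1)) A U_N − (δ₀/(N+1)) Σ_{h+k=N, h,k ≥ 1} B(U_k, U_h). Define p : ℕ → ℝ by p₁ = δ₀, p₂ = −(ν λ δ₀²)/2, and p_{N+1} = ((N−1)/(N+1)) p_{N−1} − (ν δ₀ λ/(N+1))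 p_N for N ≥ 2. Then U_n = p_n g for every n ≥ 1. -/
/-- If `A g = λ g` and `B(g,g) = 0`, then the Taylor coefficients
`U_n` of the recursion satisfy `U_n = p_n(λ) g` for all `n ≥ 1`, where `p_n` is the
scalar recursion. -/
theorem taylor_coefficients_eigenvector (V : Type*) [AddCommGroup V] [Module ℝ V]
    (A : V →ₗ[ℝ] V) (B : V →ₗ[ℝ] V →ₗ[ℝ] V) (g : V) (lam ν δ₀ : ℝ)
    (hA : A g = lam • g) (hB : B g g = 0)
    (U : ℕ → V) (p : ℕ → ℝ)
    (hU0 : U 0 = 0) (hU1 : U 1 = δ₀ • g) (hU2 : U 2 = -(ν * δ₀ ^ 2 / 2) • A g)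
    (hUrec : ∀ N : ℕ, 2 ≤ N →
      U (N + 1) = (((N : ℝ) - 1) / ((N : ℝ) + 1)) • U (N - 1)
        - (ν * δ₀ / ((N : ℝ) + 1)) • A (U N)
        - (δ₀ / ((N : ℝ) + 1)) • ∑ k ∈ Finset.Ico 1 N, B (U k) (U (N - k)))
    (hp1 : p 1 = δ₀) (hp2 : p 2 = -(ν * lam * δ₀ ^ 2) / 2)
    (hprec : ∀ N : ℕ, 2 ≤ N →
      p (N + 1) = (((N : ℝ) - 1) / ((N : ℝ) + 1)) * p (N - 1)
        - (ν * δ₀ * lam / ((N : ℝ) + 1)) * p N) :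
    ∀ n : ℕ, 1 ≤ n → U n = p n • g := by
  intro n
  induction n using Nat.strong_induction_on with
  | _ n ih =>
    intro hn
    match n, hn with
    | 1, _ => simp [hU1, hp1]
    | 2, _ =>
      rw [hU2, hp2, hA, smul_smul]; ring_nf
    | (N+1), _ =>
      rcases Nat.lt_or_ge N 2 with h2 | h2
      · interval_cases N
        · simpa [hp1] using hU1
        · rw [show (1:ℕ)+1 = 2 from rfl, hU2, hp2, hA, smul_smul]; ring_nf
      · have hrec := hUrec N h2
        have hprec' := hprec N h2
        have hN1 : U (N - 1) = p (N - 1) • g := ih (N-1) (by omega) (by omega)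
        have hNN : U N = p N • g := ih N (by omega) (by omega)
        have hsum : ∑ k ∈ Finset.Ico 1 N, B (U k) (U (N - k)) = 0 := by
          apply Finset.sum_eq_zero
          intro k hk
          simp only [Finset.mem_Ico] at hk
          rw [ih k (by omega) (by omega), ih (N-k) (by omega) (by omega)]
          simp [hB]
        rw [hrec, hsum, hN1, hNN, hprec', map_smul, hA, smul_zero, sub_zero]
        module
end
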